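/- Fix η > 0, μ ≥ 0, γ_0 ≥ μ. Define recursively γ_k = (1 - δ_k) γ_{k-1} + δ_k μ where δ_k = η γ_k (assume this system admits solutions with δ_k ∈ (0,1)), and set Γ_k = ∏_{t=1}^k (1 - δ_t). Then for all k ≥ 0, Γ_k ≤ min((1 - μη)^k, 1/(1 + γ_0 η k)). -/

import Mathlib

theorem stmt7 (η μ : ℝ) (γ δ : ℕ → ℝ) (hη : 0 < η) (hμ : 0 ≤ μ) (hμγ : μ ≤ γ 0)
    (hμη : μ * η < 1)
    (hδdef : ∀ k ≥ 1, δ k = η * γ k)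
    (hγrec : ∀ k ≥ 1, γ k = (1 - δ k) * γ (k - 1) + δ k * μ)
    (hδ01 : ∀ k ≥ 1, 0 < δ k ∧ δ k < 1) (k : ℕ) :
    ∏ t ∈ Finset.Icc 1 k, (1 - δ t)
      ≤ min ((1 - μ * η) ^ k) (1 / (1 + γ 0 * η * k)) := by
  have hμγk : ∀ n : ℕ, μ ≤ γ n := by
    intro n
    induction n with
    | zero => exact hμγ
    | succ m ih =>
      have h1 := hγrec (m+1) (by omega)
      have h2 := hδ01 (m+1) (by omega)
      simp only [Nat.add_sub_cancel] at h1
      rw [h1]; nlinarith [h2.1, h2.2]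
  have hγ0 : 0 ≤ γ 0 := le_trans hμ hμγ
  -- main induction
  have key : ∀ n : ℕ, 0 < ∏ t ∈ Finset.Icc 1 n, (1 - δ t) ∧
      γ 0 * ∏ t ∈ Finset.Icc 1 n, (1 - δ t) ≤ γ n ∧
      (∏ t ∈ Finset.Icc 1 n, (1 - δ t)) * (1 + γ 0 * η * n) ≤ 1 := by
    intro n
    induction n with
    | zero => simp
    | succ m ih =>
      obtain ⟨hP, hg, hB⟩ := ih
      have h2 := hδ01 (m+1) (by omega)
      have h1 := hγrec (m+1) (by omega)
      simp only [Nat.add_sub_cancel] at h1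
      have hd := hδdef (m+1) (by omega)
      have hprod : ∏ t ∈ Finset.Icc 1 (m+1), (1 - δ t)
          = (∏ t ∈ Finset.Icc 1 m, (1 - δ t)) * (1 - δ (m+1)) := by
        rw [Finset.prod_Icc_succ_top (by omega)]
      rw [hprod]
      have hPpos : 0 < (∏ t ∈ Finset.Icc 1 m, (1 - δ t)) * (1 - δ (m+1)) :=
        mul_pos hP (by linarith [h2.2])
      refine ⟨hPpos, ?_, ?_⟩
      · have hμ1 := hμγk (m+1)
        nlinarith [h2.1, h2.2]
      · have hγ1 : γ 0 * ((∏ t ∈ Finset.Icc 1 m, (1 - δ t)) * (1 - δ (m+1))) ≤ γ (m+1) := by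
          nlinarith [h2.1, h2.2]
        have hδge : γ 0 * η * ((∏ t ∈ Finset.Icc 1 m, (1 - δ t)) * (1 - δ (m+1))) ≤ δ (m+1) := by
          have := mul_le_mul_of_nonneg_left hγ1 hη.le
          rw [hd]; nlinarith
        have hk1 : (0:ℝ) ≤ 1 + γ 0 * η * m := by positivity
        push_cast
        nlinarith [h2.2, mul_nonneg (mul_nonneg hγ0 hη.le) hPpos.le]
  obtain ⟨hP, hg, hB⟩ := key k
  refine le_min ?_ ?_
  · have hle : ∏ t ∈ Finset.Icc 1 k, (1 - δ t) ≤ ∏ t ∈ Finset.Icc 1 k, (1 - μ * η) := by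
      apply Finset.prod_le_prod
      · intro i hi
        have := hδ01 i (Finset.mem_Icc.mp hi).1
        linarith [this.2]
      · intro i hi
        have hi1 := (Finset.mem_Icc.mp hi).1
        have hd := hδdef i hi1
        have := hμγk i
        rw [hd]; nlinarith
    calc ∏ t ∈ Finset.Icc 1 k, (1 - δ t) ≤ ∏ t ∈ Finset.Icc 1 k, (1 - μ * η) := hle
      _ = (1 - μ * η) ^ k := by rw [Finset.prod_const, Nat.card_Icc]; norm_num
  · have hpos : (0:ℝ) < 1 + γ 0 * η * k := by positivity
    rw [le_div_iff₀ hpos]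
    exact hB
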